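/- Let a, b, c : ℝ → ℝ be positive differentiable functions satisfying the E(2) Ricci flow ODE a' = (c² - a²)/(2bc), b' = (c - a)²/(2ca), c' = (a² - c²)/(2ab). Then a·c and b·(c + a) are constant functions. -/

import Mathlib

/-- E(2) Ricci flow: a·c and b·(c+a) are conserved. -/
theorem e2_conserved (a b c : ℝ → ℝ)
    (hapos : ∀ t, 0 < a t) (hbpos : ∀ t, 0 < b t) (hcpos : ∀ t, 0 < c t)
    (ha : Differentiable ℝ a) (hb : Differentiable ℝ b) (hc : Differentiable ℝ c)
    (hda : ∀ t, deriv a t = ((c t) ^ 2 - (a t) ^ 2) / (2 * b t * c t))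
    (hdb : ∀ t, deriv b t = (c t - a t) ^ 2 / (2 * c t * a t))
    (hdc : ∀ t, deriv c t = ((a t) ^ 2 - (c t) ^ 2) / (2 * a t * b t)) :
    (∀ s t, a s * c s = a t * c t) ∧
    (∀ s t, b s * (c s + a s) = b t * (c t + a t)) := by
  constructor
  · intro s t
    apply is_const_of_deriv_eq_zero (f := fun t => a t * c t) (ha.mul hc)
    intro x
    rw [deriv_fun_mul (ha x) (hc x), hda, hdc]
    have h1 := (hapos x).ne'
    have h2 := (hbpos x).ne'
    have h3 := (hcpos x).ne'
    field_simp
    ring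
  · intro s t
    apply is_const_of_deriv_eq_zero (f := fun t => b t * (c t + a t))
      (hb.mul (hc.add ha))
    intro x
    rw [deriv_fun_mul (hb x) ((hc x).fun_add (ha x)), deriv_fun_add (hc x) (ha x),
      hda, hdb, hdc]
    have h1 := (hapos x).ne'
    have h2 := (hbpos x).ne'
    have h3 := (hcpos x).ne'
    field_simp
    ring
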